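/- Let Q be the averaging operator Qx(t) = Σ_{k=1}^∞ (∫_{k-1}^k x(s)ds) χ_{(k-1,k]}(t). Then for every x ∈ L^1(0,∞) + L^∞(0,∞) and every positive integer t, K(t, Q(x*); L^1, L^∞) = K(t, x; L^1, L^∞). -/

import Mathlib

open MeasureTheory
open scoped ENNReal NNReal

/-- Lebesgue measure on the half line `(0,∞)`. -/
noncomputable def halfLineMeasure : Measure ℝ := volume.restrict (Set.Ioi 0)

/-- The nonincreasing rearrangement of `|x|` with respect to `halfLineMeasure`. -/
noncomputable def decRearr (x : ℝ → ℝ) (s : ℝ) : ℝ :=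
  sInf {τ : ℝ | 0 ≤ τ ∧ halfLineMeasure {t | τ < |x t|} ≤ ENNReal.ofReal s}

/-- The averaging operator `Qx = ∑_k (∫_{k-1}^k x) χ_{(k-1,k]}` (0-indexed cells `(k,k+1]`). -/
noncomputable def Q (x : ℝ → ℝ) (t : ℝ) : ℝ :=
  ∑' k : ℕ, Set.indicator (Set.Ioc (k : ℝ) (k + 1))
    (fun _ => ∫ s in (k : ℝ)..(k + 1), x s) t

/-- The Peetre K-functional for the couple `(L¹(0,∞), L^∞(0,∞))`. -/
noncomputable def K1inf (t : ℝ) (x : ℝ → ℝ) : ℝ≥0∞ :=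
  ⨅ (y : ℝ → ℝ) (z : ℝ → ℝ) (_ : x = y + z),
    eLpNorm y 1 halfLineMeasure + ENNReal.ofReal t * eLpNorm z ⊤ halfLineMeasure

namespace KQaux

open Set

noncomputable def lam (x : ℝ → ℝ) (τ : ℝ) : ℝ≥0∞ := halfLineMeasure {t | τ < |x t|}

lemma lam_antitone (x : ℝ → ℝ) : Antitone (lam x) := by
  intro a b hab
  exact measure_mono (fun t ht => lt_of_le_of_lt hab ht)

lemma lam_rightCont (x : ℝ → ℝ) (τ : ℝ) :
    lam x τ = ⨆ k : ℕ, lam x (τ + 1 / (k + 1)) := by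
  have h1 : {t | τ < |x t|} = ⋃ k : ℕ, {t | τ + 1 / (k + 1) < |x t|} := by
    ext t
    simp only [mem_setOf_eq, mem_iUnion]
    constructor
    · intro ht
      obtain ⟨k, hk⟩ := exists_nat_one_div_lt (sub_pos.2 ht)
      exact ⟨k, by linarith⟩
    · rintro ⟨k, hk⟩
      have : (0:ℝ) < 1 / (k + 1) := by positivity
      linarith
  have hmono : Monotone fun k : ℕ => {t | τ + 1 / (k + 1) < |x t|} := by
    intro a b hab t ht
    have h2 : (1:ℝ) / (b + 1) ≤ 1 / (a + 1) := by
      apply one_div_le_one_div_of_le (by positivity)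
      exact_mod_cast Nat.add_le_add_right hab 1
    simp only [mem_setOf_eq] at ht ⊢
    linarith
  unfold lam
  rw [h1]
  exact (hmono.directed_le).measure_iUnion


lemma cells_disjoint : Pairwise (Function.onFun Disjoint fun k : ℕ => Ioc (k:ℝ) (k+1)) := by
  intro i j hij
  simp only [Function.onFun, Set.Ioc_disjoint_Ioc]
  rcases (Ne.lt_or_gt hij) with h | h
  · have : (i:ℝ) + 1 ≤ (j:ℝ) := by exact_mod_cast Nat.succ_le_of_lt h
    exact le_trans (min_le_left _ _) (this.trans (le_max_right _ _))
  · have : (j:ℝ) + 1 ≤ (i:ℝ) := by exact_mod_cast Nat.succ_le_of_lt h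
    exact le_trans (min_le_right _ _) (this.trans (le_max_left _ _))

lemma ofReal_ne_zero_of_pos {r : ℝ} (hr : 0 < r) : ENNReal.ofReal r ≠ 0 := by
  simp [ENNReal.ofReal_eq_zero, not_le, hr]

/-- The K-functional formula via truncations. -/
lemma K_formula (n : ℕ) (hn : 0 < n) (w : ℝ → ℝ) :
    K1inf (n : ℝ) w
      = ⨅ m : ℝ≥0, (∫⁻ t, ENNReal.ofReal (|w t| - m) ∂halfLineMeasure)
          + ENNReal.ofReal (n : ℝ) * m := by
  have hn' : (0:ℝ) < n := by exact_mod_cast hn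
  apply le_antisymm
  · apply le_iInf
    intro m
    have hm : (0:ℝ) ≤ m := m.coe_nonneg
    set z : ℝ → ℝ := fun t => max (-(m:ℝ)) (min (w t) m) with hzdef
    set y : ℝ → ℝ := fun t => w t - z t with hydef
    have hdecomp : w = y + z := by
      funext t
      simp only [hydef, Pi.add_apply]
      ring
    have h1 : K1inf (n : ℝ) w
        ≤ eLpNorm y 1 halfLineMeasure
          + ENNReal.ofReal (n : ℝ) * eLpNorm z ⊤ halfLineMeasure := by
      unfold K1inf
      exact le_trans (iInf_le _ y) (le_trans (iInf_le _ z) (iInf_le _ hdecomp))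
    refine h1.trans (add_le_add ?_ ?_)
    · rw [eLpNorm_one_eq_lintegral_enorm]
      refine lintegral_mono fun t => ?_
      rw [← ofReal_norm, Real.norm_eq_abs]
      rcases le_total (|w t|) (m:ℝ) with h | h
      · have hab := abs_le.1 h
        have hzt : z t = w t := by
          simp only [hzdef]
          rw [min_eq_left hab.2, max_eq_right hab.1]
        simp only [hydef, hzt, sub_self, abs_zero, ENNReal.ofReal_zero]
        exact zero_le
      · apply ENNReal.ofReal_le_ofReal
        rcases le_total 0 (w t) with hw | hw
        · have hmw : (m:ℝ) ≤ w t := by rwa [abs_of_nonneg hw] at h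
          have hzt : z t = (m:ℝ) := by
            simp only [hzdef]
            rw [min_eq_right hmw, max_eq_right (by linarith : -(m:ℝ) ≤ (m:ℝ))]
          rw [hydef]
          simp only [hzt]
          rw [abs_of_nonneg (by linarith), abs_of_nonneg hw]
        · have hmw : w t ≤ -(m:ℝ) := by
            rw [abs_of_nonpos hw] at h
            linarith
          have hzt : z t = -(m:ℝ) := by
            simp only [hzdef]
            rw [min_eq_left (by linarith : w t ≤ (m:ℝ)), max_eq_left hmw]
          rw [hydef]
          simp only [hzt]
          rw [abs_of_nonpos (by linarith), abs_of_nonpos hw]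
          linarith
    · have hzb : eLpNorm z ⊤ halfLineMeasure ≤ (m : ℝ≥0∞) := by
        rw [eLpNorm_exponent_top]
        refine le_trans (eLpNormEssSup_le_of_ae_bound (C := (m:ℝ)) (ae_of_all _ fun t => ?_))
          (by rw [ENNReal.ofReal_coe_nnreal])
        rw [Real.norm_eq_abs, abs_le]
        constructor
        · exact le_max_left _ _
        · exact max_le (by linarith) (min_le_right _ _)
      exact mul_le_mul_right hzb _
  · unfold K1inf
    refine le_iInf fun y => le_iInf fun z => le_iInf fun hdecomp => ?_
    rcases eq_top_or_lt_top (eLpNorm z ⊤ halfLineMeasure) with hZ | hZ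
    · rw [hZ, ENNReal.mul_top (ofReal_ne_zero_of_pos hn'), add_top]
      exact le_top
    · set m : ℝ≥0 := (eLpNorm z ⊤ halfLineMeasure).toNNReal with hmdef
      have hzm : ∀ᵐ t ∂halfLineMeasure, |z t| ≤ (m:ℝ) := by
        filter_upwards [ae_le_eLpNormEssSup (f := z) (μ := halfLineMeasure)] with t ht
        have h2 : (‖z t‖₊ : ℝ≥0∞) ≤ (m : ℝ≥0∞) := by
          rw [hmdef, ENNReal.coe_toNNReal hZ.ne, eLpNorm_exponent_top]
          exact ht
        have h3 : ‖z t‖₊ ≤ m := ENNReal.coe_le_coe.1 h2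
        calc |z t| = ‖z t‖ := (Real.norm_eq_abs _).symm
          _ ≤ (m:ℝ) := h3
      refine le_trans (iInf_le _ m) (add_le_add ?_ ?_)
      · rw [eLpNorm_one_eq_lintegral_enorm]
        refine lintegral_mono_ae ?_
        filter_upwards [hzm] with t ht
        rw [← ofReal_norm]
        apply ENNReal.ofReal_le_ofReal
        rw [Real.norm_eq_abs]
        have h4 : |w t| ≤ |y t| + |z t| := by
          have : w t = y t + z t := by rw [hdecomp]; rfl
          rw [this]
          exact abs_add_le _ _
        linarith
      · rw [hmdef, ENNReal.coe_toNNReal hZ.ne]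

section x

variable (x : ℝ → ℝ)

lemma decRearr_nonneg (s : ℝ) : 0 ≤ decRearr x s :=
  Real.sInf_nonneg fun _ h => h.1

variable {x} (hx : Measurable x)
  (hmem : ∃ y z : ℝ → ℝ, x = y + z ∧ MemLp y 1 halfLineMeasure ∧
      MemLp z ⊤ halfLineMeasure)

include hmem in
lemma exists_bound : ∃ (y : ℝ → ℝ) (B : ℝ≥0), AEMeasurable (fun t => (‖y t‖₊ : ℝ≥0∞)) halfLineMeasure
    ∧ (∫⁻ t, (‖y t‖₊ : ℝ≥0∞) ∂halfLineMeasure) < ∞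
    ∧ ∀ᵐ t ∂halfLineMeasure, |x t| ≤ |y t| + B := by
  obtain ⟨y, z, hxyz, hy, hz⟩ := hmem
  refine ⟨y, (eLpNorm z ⊤ halfLineMeasure).toNNReal, hy.1.enorm, ?_, ?_⟩
  · have h := hy.2
    rw [eLpNorm_one_eq_lintegral_enorm] at h
    exact h
  · have hZ : eLpNorm z ⊤ halfLineMeasure ≠ ⊤ := hz.2.ne
    filter_upwards [ae_le_eLpNormEssSup (f := z) (μ := halfLineMeasure)] with t ht
    have h3 : ‖z t‖₊ ≤ (eLpNorm z ⊤ halfLineMeasure).toNNReal := by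
      refine ENNReal.coe_le_coe.1 ?_
      rw [ENNReal.coe_toNNReal hZ, eLpNorm_exponent_top]
      exact ht
    have h4 : |z t| ≤ ((eLpNorm z ⊤ halfLineMeasure).toNNReal : ℝ) := by
      calc |z t| = ‖z t‖ := (Real.norm_eq_abs _).symm
        _ ≤ _ := h3
    have h5 : x t = y t + z t := by rw [hxyz]; rfl
    rw [h5]
    calc |y t + z t| ≤ |y t| + |z t| := abs_add_le _ _
      _ ≤ _ := by linarith

include hmem in
lemma exists_lam_le : ∀ s : ℝ, 0 < s → ∃ τ : ℝ, 0 ≤ τ ∧ lam x τ ≤ ENNReal.ofReal s := by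
  obtain ⟨y, B, hym, hyC, hbd⟩ := exists_bound hmem
  intro s hs
  set C := ∫⁻ t, (‖y t‖₊ : ℝ≥0∞) ∂halfLineMeasure with hCdef
  have hs0 : ENNReal.ofReal s ≠ 0 := by simp [ENNReal.ofReal_eq_zero, not_le, hs]
  set r : ℝ := (C / ENNReal.ofReal s).toReal + 1 with hrdef
  have hdivne : C / ENNReal.ofReal s ≠ ⊤ :=
    (ENNReal.div_lt_top hyC.ne hs0).ne
  have hr : 0 < r := by
    have := ENNReal.toReal_nonneg (a := C / ENNReal.ofReal s)
    rw [hrdef]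
    linarith
  refine ⟨(B:ℝ) + r, by positivity, ?_⟩
  have hsub : lam x ((B:ℝ) + r) ≤ halfLineMeasure {t | ENNReal.ofReal r ≤ (‖y t‖₊ : ℝ≥0∞)} := by
    apply measure_mono_ae
    filter_upwards [hbd] with t ht hxt
    have hxt' : (B:ℝ) + r < |x t| := hxt
    show ENNReal.ofReal r ≤ (‖y t‖₊ : ℝ≥0∞)
    have h6 : r ≤ |y t| := by linarith
    calc ENNReal.ofReal r ≤ ENNReal.ofReal |y t| := ENNReal.ofReal_le_ofReal h6
      _ = (‖y t‖₊ : ℝ≥0∞) := by rw [← Real.norm_eq_abs]; exact ofReal_norm _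
  refine hsub.trans ?_
  have hmarkov := mul_meas_ge_le_lintegral₀ hym (ENNReal.ofReal r)
  have hCle : C ≤ ENNReal.ofReal s * ENNReal.ofReal r := by
    have h7 : C / ENNReal.ofReal s ≤ ENNReal.ofReal r := by
      calc C / ENNReal.ofReal s
          = ENNReal.ofReal ((C / ENNReal.ofReal s).toReal) := (ENNReal.ofReal_toReal hdivne).symm
        _ ≤ ENNReal.ofReal r := ENNReal.ofReal_le_ofReal (by simp only [hrdef]; linarith)
    calc C = C / ENNReal.ofReal s * ENNReal.ofReal s := by
          rw [ENNReal.div_mul_cancel hs0 (by simp)]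
      _ ≤ ENNReal.ofReal r * ENNReal.ofReal s := mul_le_mul_left h7 _
      _ = ENNReal.ofReal s * ENNReal.ofReal r := mul_comm _ _
  have hrne0 : ENNReal.ofReal r ≠ 0 := by simp [ENNReal.ofReal_eq_zero, not_le, hr]
  have hrnetop : ENNReal.ofReal r ≠ ⊤ := ENNReal.ofReal_ne_top
  have h8 : ENNReal.ofReal r * halfLineMeasure {t | ENNReal.ofReal r ≤ (‖y t‖₊ : ℝ≥0∞)}
      ≤ ENNReal.ofReal r * ENNReal.ofReal s := by
    refine hmarkov.trans ?_
    rw [mul_comm]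
    exact hCle
  exact (ENNReal.mul_le_mul_iff_right hrne0 hrnetop).1 h8

lemma decRearr_le {s τ : ℝ} (hτ : 0 ≤ τ) (h : lam x τ ≤ ENNReal.ofReal s) :
    decRearr x s ≤ τ :=
  csInf_le ⟨0, fun _ h' => h'.1⟩ ⟨hτ, h⟩

include hmem in
lemma le_decRearr {s τ' : ℝ} (hs : 0 < s) (h : ENNReal.ofReal s < lam x τ') :
    τ' ≤ decRearr x s := by
  obtain ⟨τ0, hτ0, hτ0le⟩ := exists_lam_le hmem s hs
  refine le_csInf ⟨τ0, hτ0, hτ0le⟩ ?_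
  rintro τ'' ⟨-, h''⟩
  by_contra hlt
  push_neg at hlt
  exact absurd (lam_antitone x hlt.le) (by
    intro hle
    exact absurd (hle.trans h'') (not_le.2 h))

include hmem in
lemma decRearr_antitoneOn : AntitoneOn (decRearr x) (Ioi 0) := by
  intro s hs s' hs' hss'
  obtain ⟨τ0, hτ0, hτ0le⟩ := exists_lam_le hmem s hs
  refine csInf_le_csInf ⟨0, fun _ h' => h'.1⟩ ⟨τ0, hτ0, hτ0le⟩ ?_
  rintro τ ⟨h1, h2⟩
  exact ⟨h1, h2.trans (ENNReal.ofReal_le_ofReal hss')⟩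

lemma volume_aux (c : ℝ≥0∞) : volume {s : ℝ | 0 < s ∧ ENNReal.ofReal s < c} = c := by
  rcases eq_top_or_lt_top c with rfl | hc
  · have h1 : {s : ℝ | 0 < s ∧ ENNReal.ofReal s < ⊤} = Ioi 0 := by
      ext s; simp [ENNReal.ofReal_lt_top]
    rw [h1, Real.volume_Ioi]
  · have h1 : {s : ℝ | 0 < s ∧ ENNReal.ofReal s < c} = Ioo 0 c.toReal := by
      ext s
      simp only [mem_setOf_eq, mem_Ioo, and_congr_right_iff]
      intro hs
      exact ENNReal.ofReal_lt_iff_lt_toReal hs.le hc.ne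
    rw [h1, Real.volume_Ioo, sub_zero, ENNReal.ofReal_toReal hc.ne]

include hmem in
lemma decRearr_distribution {τ : ℝ} (hτ : 0 ≤ τ) :
    halfLineMeasure {s | τ < decRearr x s} = lam x τ := by
  have happ : halfLineMeasure {s | τ < decRearr x s}
      = volume ({s | τ < decRearr x s} ∩ Ioi 0) := by
    rw [halfLineMeasure, Measure.restrict_apply' measurableSet_Ioi]
  apply le_antisymm
  · rw [happ]
    have hsub : {s | τ < decRearr x s} ∩ Ioi 0
        ⊆ {s : ℝ | 0 < s ∧ ENNReal.ofReal s < lam x τ} := by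
      rintro s ⟨h1, h2⟩
      refine ⟨h2, ?_⟩
      by_contra hle
      push_neg at hle
      exact absurd (decRearr_le hτ hle) (not_le.2 h1)
    calc volume ({s | τ < decRearr x s} ∩ Ioi 0)
        ≤ volume {s : ℝ | 0 < s ∧ ENNReal.ofReal s < lam x τ} := measure_mono hsub
      _ = lam x τ := volume_aux _
  · rw [lam_rightCont x τ]
    refine iSup_le fun k => ?_
    have hε : (0:ℝ) < 1 / (k + 1) := by positivity
    have hsub : {s : ℝ | 0 < s ∧ ENNReal.ofReal s < lam x (τ + 1 / (k + 1))}
        ⊆ {s | τ < decRearr x s} ∩ Ioi 0 := by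
      rintro s ⟨h1, h2⟩
      refine ⟨?_, h1⟩
      have := le_decRearr hmem h1 h2
      simp only [mem_setOf_eq]
      linarith
    calc lam x (τ + 1 / (k + 1))
        = volume {s : ℝ | 0 < s ∧ ENNReal.ofReal s < lam x (τ + 1 / (k + 1))} :=
          (volume_aux _).symm
      _ ≤ volume ({s | τ < decRearr x s} ∩ Ioi 0) := measure_mono hsub
      _ = halfLineMeasure {s | τ < decRearr x s} := happ.symm

lemma indicator_measurable_of_antitoneOn {f : ℝ → ℝ} (hmono : AntitoneOn f (Ioi 0)) :
    Measurable ((Ioi (0:ℝ)).indicator f) := by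
  apply measurable_of_Iio
  intro c
  have hA : MeasurableSet {s : ℝ | 0 < s ∧ f s < c} := by
    apply Set.OrdConnected.measurableSet
    constructor
    rintro a ⟨ha0, hac⟩ b ⟨hb0, hbc⟩ t ⟨hat, htb⟩
    have ht0 : 0 < t := lt_of_lt_of_le ha0 hat
    exact ⟨ht0, lt_of_le_of_lt (hmono ha0 ht0 hat) hac⟩
  by_cases hc : (0:ℝ) < c
  · have h1 : (Ioi (0:ℝ)).indicator f ⁻¹' Iio c = {s : ℝ | 0 < s ∧ f s < c} ∪ Iic 0 := by
      ext s
      simp only [mem_preimage, mem_Iio, mem_union, mem_setOf_eq, mem_Iic, Set.indicator]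
      by_cases hs : s ∈ Ioi (0:ℝ)
      · simp only [if_pos hs]
        constructor
        · intro h; exact Or.inl ⟨hs, h⟩
        · rintro (⟨-, h⟩ | h)
          · exact h
          · exact absurd hs (by simp [not_lt.2 h])
      · simp only [if_neg hs]
        simp only [mem_Ioi, not_lt] at hs
        constructor
        · intro _; exact Or.inr hs
        · intro _; exact hc
    rw [h1]
    exact hA.union measurableSet_Iic
  · have h1 : (Ioi (0:ℝ)).indicator f ⁻¹' Iio c = {s : ℝ | 0 < s ∧ f s < c} := by
      ext s
      simp only [mem_preimage, mem_Iio, mem_setOf_eq, Set.indicator]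
      by_cases hs : s ∈ Ioi (0:ℝ)
      · simp only [if_pos hs]
        exact ⟨fun h => ⟨hs, h⟩, fun h => h.2⟩
      · simp only [if_neg hs]
        constructor
        · intro h; exact absurd h (by simpa using hc)
        · rintro ⟨h0, -⟩; exact absurd hs (by simpa using h0)
    rw [h1]
    exact hA

lemma aemeasurable_restrict_of_antitoneOn {f : ℝ → ℝ} (hmono : AntitoneOn f (Ioi 0))
    {S : Set ℝ} (hSm : MeasurableSet S) (hS : S ⊆ Ioi 0) :
    AEMeasurable f (volume.restrict S) := by
  refine ⟨(Ioi (0:ℝ)).indicator f, indicator_measurable_of_antitoneOn hmono, ?_⟩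
  filter_upwards [ae_restrict_mem hSm] with t ht
  rw [Set.indicator_of_mem (hS ht)]

include hmem in
lemma decRearr_aemeasurable_restrict {S : Set ℝ} (hSm : MeasurableSet S) (hS : S ⊆ Ioi 0) :
    AEMeasurable (decRearr x) (volume.restrict S) :=
  aemeasurable_restrict_of_antitoneOn (decRearr_antitoneOn hmem) hSm hS

include hx hmem in
/-- Equality of truncated integrals (equimeasurability). -/
lemma trunc_eq {m : ℝ} (hm : 0 ≤ m) :
    ∫⁻ t, ENNReal.ofReal (|x t| - m) ∂halfLineMeasure
      = ∫⁻ s, ENNReal.ofReal (decRearr x s - m) ∂halfLineMeasure := by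
  have hL : ∫⁻ t, ENNReal.ofReal (|x t| - m) ∂halfLineMeasure
      = ∫⁻ τ in Ioi (0:ℝ), lam x (m + τ) := by
    have h0 : (fun t => ENNReal.ofReal (|x t| - m))
        = fun t => ENNReal.ofReal (max (|x t| - m) 0) := by
      funext t
      rcases le_total (|x t| - m) 0 with h | h
      · rw [max_eq_right h, ENNReal.ofReal_of_nonpos h, ENNReal.ofReal_zero]
      · rw [max_eq_left h]
    rw [h0]
    have hxmeas : AEMeasurable (fun t => max (|x t| - m) 0) halfLineMeasure :=
      ((hx.abs.sub measurable_const).max measurable_const).aemeasurable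
    rw [lintegral_eq_lintegral_meas_lt (f := fun t => max (|x t| - m) 0) halfLineMeasure
      (ae_of_all _ fun t => le_max_right _ _) hxmeas]
    refine setLIntegral_congr_fun measurableSet_Ioi (fun τ hτ => ?_)
    have hset : {a : ℝ | τ < max (|x a| - m) 0} = {t : ℝ | m + τ < |x t|} := by
      ext a
      simp only [mem_setOf_eq, lt_max_iff]
      constructor
      · rintro (h | h)
        · linarith
        · exact absurd hτ (by simpa using h.asymm)
      · intro h
        exact Or.inl (by linarith)
    rw [hset]
    rfl
  have hR : ∫⁻ s, ENNReal.ofReal (decRearr x s - m) ∂halfLineMeasure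
      = ∫⁻ τ in Ioi (0:ℝ), lam x (m + τ) := by
    have h0 : (fun s => ENNReal.ofReal (decRearr x s - m))
        = fun s => ENNReal.ofReal (max (decRearr x s - m) 0) := by
      funext t
      rcases le_total (decRearr x t - m) 0 with h | h
      · rw [max_eq_right h, ENNReal.ofReal_of_nonpos h, ENNReal.ofReal_zero]
      · rw [max_eq_left h]
    rw [h0]
    have hfae : AEMeasurable (decRearr x) halfLineMeasure :=
      decRearr_aemeasurable_restrict hmem measurableSet_Ioi (subset_refl _)
    have hfmeas : AEMeasurable (fun s => max (decRearr x s - m) 0) halfLineMeasure :=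
      ((hfae.sub aemeasurable_const).max aemeasurable_const)
    rw [lintegral_eq_lintegral_meas_lt (f := fun s => max (decRearr x s - m) 0) halfLineMeasure
      (ae_of_all _ fun t => le_max_right _ _) hfmeas]
    refine setLIntegral_congr_fun measurableSet_Ioi (fun τ hτ => ?_)
    have hτ' : (0:ℝ) < τ := hτ
    have hset : {a : ℝ | τ < max (decRearr x a - m) 0} = {s : ℝ | m + τ < decRearr x s} := by
      ext a
      simp only [mem_setOf_eq, lt_max_iff]
      constructor
      · rintro (h | h)
        · linarith
        · exact absurd hτ' (by simpa using h.asymm)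
      · intro h
        exact Or.inl (by linarith)
    rw [hset]
    exact decRearr_distribution hmem (by linarith)
  rw [hL, hR]

lemma restrict_Ioc_le {c : ℝ} :
    volume.restrict (Ioc (0:ℝ) c) ≤ halfLineMeasure := by
  have h1 : volume.restrict (Ioc (0:ℝ) c) = halfLineMeasure.restrict (Ioc 0 c) := by
    rw [halfLineMeasure, Measure.restrict_restrict measurableSet_Ioc]
    congr 1
    exact (Set.inter_eq_left.2 Set.Ioc_subset_Ioi_self).symm
  rw [h1]
  exact Measure.restrict_le_self

include hx hmem in
lemma decRearr_lintegral_finite {c : ℝ} (hc : 0 ≤ c) :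
    ∫⁻ s in Ioc 0 c, ENNReal.ofReal (decRearr x s) < ∞ := by
  obtain ⟨y, B, hym, hyC, hbd⟩ := exists_bound hmem
  have step1 : ∫⁻ s in Ioc (0:ℝ) c, ENNReal.ofReal (decRearr x s)
      ≤ (∫⁻ s in Ioc (0:ℝ) c, ENNReal.ofReal (decRearr x s - B))
        + ENNReal.ofReal (B:ℝ) * ENNReal.ofReal c := by
    calc ∫⁻ s in Ioc (0:ℝ) c, ENNReal.ofReal (decRearr x s)
        ≤ ∫⁻ s in Ioc (0:ℝ) c,
            (ENNReal.ofReal (decRearr x s - B) + ENNReal.ofReal (B:ℝ)) := by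
          refine lintegral_mono fun s => ?_
          calc ENNReal.ofReal (decRearr x s)
              = ENNReal.ofReal ((decRearr x s - B) + B) := by ring_nf
            _ ≤ _ := ENNReal.ofReal_add_le
      _ = (∫⁻ s in Ioc (0:ℝ) c, ENNReal.ofReal (decRearr x s - B))
            + ENNReal.ofReal (B:ℝ) * volume (Ioc (0:ℝ) c) := by
          rw [lintegral_add_right' _ aemeasurable_const, setLIntegral_const]
      _ = _ := by rw [Real.volume_Ioc, sub_zero]
  have step2 : (∫⁻ s in Ioc (0:ℝ) c, ENNReal.ofReal (decRearr x s - B))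
      ≤ ∫⁻ s, ENNReal.ofReal (decRearr x s - B) ∂halfLineMeasure :=
    lintegral_mono' restrict_Ioc_le le_rfl
  have step3 : (∫⁻ s, ENNReal.ofReal (decRearr x s - B) ∂halfLineMeasure)
      ≤ ∫⁻ t, (‖y t‖₊ : ℝ≥0∞) ∂halfLineMeasure := by
    rw [← trunc_eq hx hmem B.coe_nonneg]
    refine lintegral_mono_ae ?_
    filter_upwards [hbd] with t ht
    calc ENNReal.ofReal (|x t| - B) ≤ ENNReal.ofReal (|y t|) :=
          ENNReal.ofReal_le_ofReal (by linarith)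
      _ = (‖y t‖₊ : ℝ≥0∞) := by rw [← Real.norm_eq_abs]; exact ofReal_norm _
  calc ∫⁻ s in Ioc (0:ℝ) c, ENNReal.ofReal (decRearr x s)
      ≤ (∫⁻ t, (‖y t‖₊ : ℝ≥0∞) ∂halfLineMeasure) + ENNReal.ofReal (B:ℝ) * ENNReal.ofReal c :=
        step1.trans (add_le_add (step2.trans step3) le_rfl)
    _ < ∞ := ENNReal.add_lt_top.2 ⟨hyC, ENNReal.mul_lt_top ENNReal.ofReal_lt_top ENNReal.ofReal_lt_top⟩

lemma Ioc_cell_subset (k : ℕ) : Ioc ((k:ℝ)) ((k:ℝ) + 1) ⊆ Ioi 0 :=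
  fun t ht => lt_of_le_of_lt (Nat.cast_nonneg k) ht.1

include hx hmem in
lemma decRearr_integrableOn (k : ℕ) :
    IntegrableOn (decRearr x) (Ioc (k : ℝ) (k + 1)) volume := by
  constructor
  · exact (decRearr_aemeasurable_restrict hmem measurableSet_Ioc
      (Ioc_cell_subset k)).aestronglyMeasurable
  · rw [hasFiniteIntegral_iff_ofReal (ae_of_all _ fun s => decRearr_nonneg x s)]
    calc ∫⁻ s in Ioc ((k:ℝ)) ((k:ℝ)+1), ENNReal.ofReal (decRearr x s)
        ≤ ∫⁻ s in Ioc (0:ℝ) ((k:ℝ)+1), ENNReal.ofReal (decRearr x s) :=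
          lintegral_mono_set (Set.Ioc_subset_Ioc_left (Nat.cast_nonneg k))
      _ < ∞ := decRearr_lintegral_finite hx hmem (by positivity)

noncomputable def aseq (k : ℕ) : ℝ := ∫ s in (k : ℝ)..(k + 1), decRearr x s

include hx hmem in
lemma aseq_eq_lintegral (k : ℕ) :
    ENNReal.ofReal (aseq (x := x) k)
      = ∫⁻ s in Ioc (k : ℝ) (k + 1), ENNReal.ofReal (decRearr x s) := by
  unfold aseq
  rw [intervalIntegral.integral_of_le (by linarith : (k:ℝ) ≤ (k:ℝ) + 1)]
  exact ofReal_integral_eq_lintegral_ofReal (decRearr_integrableOn hx hmem k)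
    (ae_of_all _ fun s => decRearr_nonneg x s)

lemma aseq_nonneg (k : ℕ) : 0 ≤ aseq (x := x) k := by
  unfold aseq
  exact intervalIntegral.integral_nonneg (by linarith : (k:ℝ) ≤ (k:ℝ) + 1)
    (fun u _ => decRearr_nonneg x u)

include hx hmem in
lemma aseq_antitone : Antitone (aseq (x := x)) := by
  have hmono := decRearr_antitoneOn hmem
  apply antitone_nat_of_succ_le
  intro k
  have hInt1 : IntegrableOn (decRearr x) (Ioc ((k:ℝ)+1) ((k:ℝ)+1+1)) volume := by
    have := decRearr_integrableOn hx hmem (k+1)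
    have hcast : Ioc (((k+1:ℕ):ℝ)) ((((k+1:ℕ):ℝ)) + 1) = Ioc ((k:ℝ)+1) ((k:ℝ)+1+1) := by
      push_cast; ring_nf
    rwa [hcast] at this
  have h1 : (∫ s in (k:ℝ)..((k:ℝ)+1), decRearr x (s + 1))
      = ∫ s in ((k:ℝ)+1)..((k:ℝ)+1+1), decRearr x s := by
    have := intervalIntegral.integral_comp_add_right (a := (k:ℝ)) (b := (k:ℝ)+1)
      (f := fun s => decRearr x s) 1
    rw [this]
  have h2 : aseq (x := x) (k+1) = ∫ s in ((k:ℝ)+1)..((k:ℝ)+1+1), decRearr x s := by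
    unfold aseq
    push_cast
    ring_nf
  have hIntShift : IntegrableOn (fun s => decRearr x (s + 1)) (Ioc ((k:ℝ)) ((k:ℝ)+1)) volume := by
    have hii : IntervalIntegrable (decRearr x) volume ((k:ℝ)+1) ((k:ℝ)+1+1) := by
      rw [intervalIntegrable_iff_integrableOn_Ioc_of_le (by linarith)]
      exact hInt1
    have := hii.comp_add_right 1
    have hend : ((k:ℝ)+1-1) = (k:ℝ) ∧ ((k:ℝ)+1+1-1) = (k:ℝ)+1 := by constructor <;> ring
    rw [hend.1, hend.2] at this
    rwa [intervalIntegrable_iff_integrableOn_Ioc_of_le (by linarith)] at this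
  have h3 : (∫ s in (k:ℝ)..((k:ℝ)+1), decRearr x (s + 1))
      ≤ ∫ s in (k:ℝ)..((k:ℝ)+1), decRearr x s := by
    rw [intervalIntegral.integral_of_le (by linarith : (k:ℝ) ≤ (k:ℝ)+1),
      intervalIntegral.integral_of_le (by linarith : (k:ℝ) ≤ (k:ℝ)+1)]
    refine setIntegral_mono_on hIntShift (decRearr_integrableOn hx hmem k)
      measurableSet_Ioc fun s hs => ?_
    have hs0 : (0:ℝ) < s := Ioc_cell_subset k hs
    exact hmono (mem_Ioi.2 hs0) (mem_Ioi.2 (by linarith)) (by linarith)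
  calc aseq (x := x) (k+1) = ∫ s in (k:ℝ)..((k:ℝ)+1), decRearr x (s + 1) := by
        rw [h2, h1]
    _ ≤ ∫ s in (k:ℝ)..((k:ℝ)+1), decRearr x s := h3
    _ = aseq (x := x) k := rfl

include hx hmem in
lemma sum_aseq (n : ℕ) :
    ∑ k ∈ Finset.range n, ENNReal.ofReal (aseq (x := x) k)
      = ∫⁻ s in Ioc (0 : ℝ) (n : ℝ), ENNReal.ofReal (decRearr x s) := by
  induction n with
  | zero => simp
  | succ n ih =>
    rw [Finset.sum_range_succ, ih, aseq_eq_lintegral hx hmem n]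
    have hcast : ((n+1:ℕ):ℝ) = (n:ℝ) + 1 := by push_cast; ring
    rw [hcast]
    have hu : Ioc (0:ℝ) ((n:ℝ)+1) = Ioc (0:ℝ) (n:ℝ) ∪ Ioc ((n:ℝ)) ((n:ℝ)+1) :=
      (Set.Ioc_union_Ioc_eq_Ioc (Nat.cast_nonneg n) (by linarith)).symm
    rw [hu, lintegral_union measurableSet_Ioc
      (Set.Ioc_disjoint_Ioc.2 (le_trans (min_le_left _ _) (le_max_right _ _)))]

lemma Q_decRearr_eq {k : ℕ} {t : ℝ} (ht : t ∈ Ioc (k : ℝ) (k + 1)) :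
    Q (decRearr x) t = aseq (x := x) k := by
  unfold Q
  rw [tsum_eq_single k]
  · rw [Set.indicator_of_mem ht]
    rfl
  · intro j hj
    apply Set.indicator_of_notMem
    intro htj
    exact (cells_disjoint hj).ne_of_mem htj ht rfl

lemma iUnion_cells : (⋃ k : ℕ, Ioc (k : ℝ) (k + 1)) = Ioi 0 := by
  ext t
  simp only [mem_iUnion, mem_Ioc, mem_Ioi]
  constructor
  · rintro ⟨k, hk1, _⟩
    have : (0:ℝ) ≤ k := Nat.cast_nonneg k
    linarith
  · intro ht
    have hc : 1 ≤ ⌈t⌉₊ := Nat.one_le_iff_ne_zero.2 (by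
      intro h0
      have := Nat.ceil_eq_zero.1 h0
      linarith)
    refine ⟨⌈t⌉₊ - 1, ?_, ?_⟩
    · have hcast : ((⌈t⌉₊ - 1 : ℕ) : ℝ) = (⌈t⌉₊ : ℝ) - 1 := by
        push_cast [hc]; ring
      rw [hcast]
      have := Nat.ceil_lt_add_one ht.le
      linarith
    · have hcast : ((⌈t⌉₊ - 1 : ℕ) : ℝ) + 1 = (⌈t⌉₊ : ℝ) := by
        push_cast [hc]; ring
      rw [hcast]
      exact Nat.le_ceil t


lemma Q_lintegral (m : ℝ≥0) :
    ∫⁻ t, ENNReal.ofReal (|Q (decRearr x) t| - m) ∂halfLineMeasure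
      = ∑' k : ℕ, ENNReal.ofReal (aseq (x := x) k - m) := by
  have hμ : halfLineMeasure = volume.restrict (⋃ k : ℕ, Ioc ((k:ℝ)) ((k:ℝ)+1)) := by
    rw [iUnion_cells]; rfl
  rw [hμ]
  have := lintegral_iUnion (μ := volume) (fun k : ℕ => measurableSet_Ioc) cells_disjoint
    (fun t => ENNReal.ofReal (|Q (decRearr x) t| - m))
  rw [this]
  refine tsum_congr fun k => ?_
  have hcongr : ∫⁻ t in Ioc ((k:ℝ)) ((k:ℝ)+1), ENNReal.ofReal (|Q (decRearr x) t| - m)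
      = ∫⁻ _ in Ioc ((k:ℝ)) ((k:ℝ)+1), ENNReal.ofReal (aseq (x := x) k - m) := by
    refine setLIntegral_congr_fun measurableSet_Ioc (fun t ht => ?_)
    rw [Q_decRearr_eq ht, abs_of_nonneg (aseq_nonneg k)]
  rw [hcongr, setLIntegral_const, Real.volume_Ioc]
  norm_num

end x

/-- Abstract infimum identity for a nonincreasing nonnegative sequence. -/
lemma inf_sum_eq {a : ℕ → ℝ} (ha : Antitone a) (ha0 : ∀ k, 0 ≤ a k)
    {n : ℕ} (hn : 0 < n) :
    (⨅ m : ℝ≥0, (∑' k : ℕ, ENNReal.ofReal (a k - m)) + ENNReal.ofReal (n : ℝ) * m)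
      = ∑ k ∈ Finset.range n, ENNReal.ofReal (a k) := by
  have hofn : (ENNReal.ofReal (n:ℝ)) = (n : ℝ≥0∞) := ENNReal.ofReal_natCast n
  apply le_antisymm
  · set m0 : ℝ≥0 := ⟨a (n-1), ha0 _⟩ with hm0
    have hm0c : (m0 : ℝ) = a (n-1) := rfl
    refine le_trans (iInf_le _ m0) ?_
    have hvan : ∀ k ∉ Finset.range n, ENNReal.ofReal (a k - m0) = 0 := by
      intro k hk
      simp only [Finset.mem_range, not_lt] at hk
      have h1 : a k ≤ a (n-1) := ha (le_trans (Nat.sub_le n 1) hk)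
      exact ENNReal.ofReal_eq_zero.2 (by rw [hm0c]; linarith)
    rw [tsum_eq_sum hvan]
    have hconst : ENNReal.ofReal (n:ℝ) * (m0:ℝ≥0∞) = ∑ _k ∈ Finset.range n, (m0:ℝ≥0∞) := by
      rw [Finset.sum_const, Finset.card_range, nsmul_eq_mul, hofn]
    rw [hconst, ← Finset.sum_add_distrib]
    refine le_of_eq (Finset.sum_congr rfl fun k hk => ?_)
    have hk' : k ≤ n - 1 := Nat.le_sub_one_of_lt (Finset.mem_range.1 hk)
    have hle : (m0:ℝ) ≤ a k := by rw [hm0c]; exact ha hk'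
    rw [ENNReal.ofReal_sub _ m0.coe_nonneg, ENNReal.ofReal_coe_nnreal]
    refine tsub_add_cancel_of_le ?_
    rw [← ENNReal.ofReal_coe_nnreal]
    exact ENNReal.ofReal_le_ofReal hle
  · refine le_iInf fun m => ?_
    calc ∑ k ∈ Finset.range n, ENNReal.ofReal (a k)
        ≤ ∑ k ∈ Finset.range n, (ENNReal.ofReal (a k - m) + (m:ℝ≥0∞)) := by
          refine Finset.sum_le_sum fun k _ => ?_
          rw [← ENNReal.ofReal_coe_nnreal]
          calc ENNReal.ofReal (a k) = ENNReal.ofReal ((a k - m) + m) := by ring_nf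
            _ ≤ _ := ENNReal.ofReal_add_le
      _ = (∑ k ∈ Finset.range n, ENNReal.ofReal (a k - m)) + ENNReal.ofReal (n:ℝ) * m := by
          rw [Finset.sum_add_distrib, Finset.sum_const, Finset.card_range, nsmul_eq_mul, hofn]
      _ ≤ (∑' k : ℕ, ENNReal.ofReal (a k - m)) + ENNReal.ofReal (n:ℝ) * m :=
          add_le_add (ENNReal.sum_le_tsum _) le_rfl

/-- Abstract infimum identity for a nonincreasing nonnegative function. -/
lemma inf_lintegral_eq {f : ℝ → ℝ} (hmono : AntitoneOn f (Ioi 0)) (hf0 : ∀ s, 0 ≤ f s)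
    (hmeas : ∀ S : Set ℝ, MeasurableSet S → S ⊆ Ioi 0 → AEMeasurable f (volume.restrict S))
    {n : ℕ} (hn : 0 < n) :
    (⨅ m : ℝ≥0, (∫⁻ s, ENNReal.ofReal (f s - m) ∂halfLineMeasure)
        + ENNReal.ofReal (n : ℝ) * m)
      = ∫⁻ s in Ioc (0 : ℝ) (n : ℝ), ENNReal.ofReal (f s) := by
  have hn' : (0:ℝ) < n := by exact_mod_cast hn
  have hconst : ∀ m : ℝ≥0, ENNReal.ofReal (n:ℝ) * (m:ℝ≥0∞)
      = ∫⁻ _ in Ioc (0:ℝ) (n:ℝ), (m:ℝ≥0∞) := by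
    intro m
    rw [setLIntegral_const, Real.volume_Ioc, sub_zero, mul_comm]
  apply le_antisymm
  · set m0 : ℝ≥0 := ⟨f (n:ℝ), hf0 _⟩ with hm0
    have hm0c : (m0 : ℝ) = f (n:ℝ) := rfl
    refine le_trans (iInf_le _ m0) ?_
    have hsplit : ∫⁻ s, ENNReal.ofReal (f s - m0) ∂halfLineMeasure
        = ∫⁻ s in Ioc (0:ℝ) (n:ℝ), ENNReal.ofReal (f s - m0) := by
      have hior : volume.restrict (Ioi (0:ℝ))
          = volume.restrict (Ioc (0:ℝ) (n:ℝ) ∪ Ioi (n:ℝ)) := by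
        rw [Set.Ioc_union_Ioi_eq_Ioi hn'.le]
      rw [halfLineMeasure, hior, lintegral_union measurableSet_Ioi
        (Set.disjoint_left.2 fun t h1 h2 => absurd h1.2 (not_le.2 h2))]
      have hzero : ∫⁻ s in Ioi (n:ℝ), ENNReal.ofReal (f s - m0) = 0 := by
        have : ∫⁻ s in Ioi (n:ℝ), ENNReal.ofReal (f s - m0)
            = ∫⁻ _ in Ioi (n:ℝ), (0:ℝ≥0∞) := by
          refine setLIntegral_congr_fun measurableSet_Ioi (fun s hs => ?_)
          have h4 : f s ≤ f (n:ℝ) := hmono (mem_Ioi.2 hn') (mem_Ioi.2 (lt_trans hn' hs)) (le_of_lt hs)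
          exact ENNReal.ofReal_eq_zero.2 (by rw [hm0c]; linarith)
        rw [this, lintegral_const, zero_mul]
      rw [hzero, add_zero]
    rw [hsplit, hconst m0, ← lintegral_add_right' _ aemeasurable_const]
    refine le_of_eq (setLIntegral_congr_fun measurableSet_Ioc (fun s hs => ?_))
    have hs0 : (0:ℝ) < s := hs.1
    have h5 : f (n:ℝ) ≤ f s := hmono (mem_Ioi.2 hs0) (mem_Ioi.2 hn') hs.2
    rw [← ENNReal.ofReal_coe_nnreal, hm0c,
      ← ENNReal.ofReal_add (by linarith) (hf0 (n:ℝ))]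
    ring_nf
  · refine le_iInf fun m => ?_
    have h1 : ∫⁻ s in Ioc (0:ℝ) (n:ℝ), ENNReal.ofReal (f s - m)
        ≤ ∫⁻ s, ENNReal.ofReal (f s - m) ∂halfLineMeasure :=
      lintegral_mono' restrict_Ioc_le le_rfl
    calc ∫⁻ s in Ioc (0:ℝ) (n:ℝ), ENNReal.ofReal (f s)
        ≤ ∫⁻ s in Ioc (0:ℝ) (n:ℝ), (ENNReal.ofReal (f s - m) + (m:ℝ≥0∞)) := by
          refine lintegral_mono fun s => ?_
          rw [← ENNReal.ofReal_coe_nnreal]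
          calc ENNReal.ofReal (f s) = ENNReal.ofReal ((f s - m) + m) := by ring_nf
            _ ≤ _ := ENNReal.ofReal_add_le
      _ = (∫⁻ s in Ioc (0:ℝ) (n:ℝ), ENNReal.ofReal (f s - m))
            + ENNReal.ofReal (n:ℝ) * m := by
          rw [lintegral_add_right' _ aemeasurable_const, hconst m]
      _ ≤ _ := add_le_add h1 le_rfl

end KQaux

open KQaux in
/-- For every `x ∈ L¹ + L^∞` and every positive integer `t`,
`K(t, Q(x*); L¹, L^∞) = K(t, x; L¹, L^∞)`. -/
theorem K1inf_Q_rearrangement (x : ℝ → ℝ) (hx : Measurable x)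
    (hmem : ∃ y z : ℝ → ℝ, x = y + z ∧ MemLp y 1 halfLineMeasure ∧
      MemLp z ⊤ halfLineMeasure)
    (n : ℕ) (hn : 0 < n) :
    K1inf (n : ℝ) (Q (decRearr x)) = K1inf (n : ℝ) x := by
  have hmono := decRearr_antitoneOn hmem
  calc K1inf (n : ℝ) (Q (decRearr x))
      = ⨅ m : ℝ≥0, (∫⁻ t, ENNReal.ofReal (|Q (decRearr x) t| - m) ∂halfLineMeasure)
          + ENNReal.ofReal (n : ℝ) * m := K_formula n hn _
    _ = ⨅ m : ℝ≥0, (∑' k : ℕ, ENNReal.ofReal (aseq (x := x) k - m))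
          + ENNReal.ofReal (n : ℝ) * m := by
          refine iInf_congr fun m => ?_
          rw [Q_lintegral]
    _ = ∑ k ∈ Finset.range n, ENNReal.ofReal (aseq (x := x) k) :=
          inf_sum_eq (aseq_antitone hx hmem) (fun k => aseq_nonneg k) hn
    _ = ∫⁻ s in Set.Ioc (0 : ℝ) (n : ℝ), ENNReal.ofReal (decRearr x s) :=
          sum_aseq hx hmem n
    _ = ⨅ m : ℝ≥0, (∫⁻ s, ENNReal.ofReal (decRearr x s - m) ∂halfLineMeasure)
          + ENNReal.ofReal (n : ℝ) * m :=
          (inf_lintegral_eq hmono (decRearr_nonneg x)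
            (fun S hSm hS => decRearr_aemeasurable_restrict hmem hSm hS) hn).symm
    _ = ⨅ m : ℝ≥0, (∫⁻ t, ENNReal.ofReal (|x t| - m) ∂halfLineMeasure)
          + ENNReal.ofReal (n : ℝ) * m := by
          refine iInf_congr fun m => ?_
          rw [trunc_eq hx hmem m.coe_nonneg]
    _ = K1inf (n : ℝ) x := (K_formula n hn x).symm
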